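/- Suppose d_{G/K}((x,g),(y,h)) ≥ |x−y| for all x,y ∈ ℝ^r, g,h ∈ N, with equality when g = h, and suppose d_{G/K}((a, F_a(x)), (a, F_a(y))) ≤ C d₀(x,y) for small distances (via the distortion bound) and Δ is ε₁-dense in (N, d₀). Then X(Δ) = {(a, F_a(g)) : a ∈ ℤ^r, g ∈ Δ} is ε-dense in ℝ^r × N with respect to d_{G/K}, where ε = C ε₁ + 2r: every point (x, g) ∈ ℝ^r × N lies within d_{G/K}-distance ε of some point of X(Δ). -/
import Mathlib


/-- The point of `ℝ^r` with integer coordinates `m`. -/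
noncomputable def intPt (r : ℕ) (m : Fin r → ℤ) : EuclideanSpace ℝ (Fin r) :=
  (WithLp.equiv 2 (Fin r → ℝ)).symm (fun i => (m i : ℝ))

/-- The net `X(Δ) = {(a, F_a g) : a ∈ ℤ^r, g ∈ Δ}` inside `ℝ^r × N`. -/
def XSet (r : ℕ) {N : Type*} (Δ : Set N)
    (F : EuclideanSpace ℝ (Fin r) → N → N) :
    Set (EuclideanSpace ℝ (Fin r) × N) :=
  {p | ∃ (m : Fin r → ℤ) (g : N), g ∈ Δ ∧ p = (intPt r m, F (intPt r m) g)}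

/-- Suppose `d_{G/K}` satisfies the triangle inequality, the flat
lemma `d_{G/K}((x,g),(y,h)) ≥ |x−y|` with equality `= |x−y|` when `g = h`, the
small-distance distortion bound
`d_{G/K}((a, F_a x),(a, F_a y)) ≤ C d₀(x,y)` for `d₀(x,y) ≤ ε₁`, the dilations
satisfy `F_a ∘ F_{−a} = id`, and `Δ` is `ε₁`-dense in `(N, d₀)`.  Then `X(Δ)`
is `ε`-dense in `ℝ^r × N` for `ε = C ε₁ + 2r`. -/
theorem XSet_coarsely_dense
    (r : ℕ) {N : Type*} [MetricSpace N]
    (Δ : Set N) (ε₁ : ℝ) (hε₁ : 0 < ε₁)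
    (hdense : ∀ g : N, ∃ h ∈ Δ, dist g h ≤ ε₁)
    (F : EuclideanSpace ℝ (Fin r) → N → N)
    (hFinv : ∀ (a : EuclideanSpace ℝ (Fin r)) (g : N), F a (F (-a) g) = g)
    (dGK : EuclideanSpace ℝ (Fin r) × N → EuclideanSpace ℝ (Fin r) × N → ℝ)
    (htri : ∀ p q w, dGK p w ≤ dGK p q + dGK q w)
    (hflat : ∀ (x y : EuclideanSpace ℝ (Fin r)) (g h : N),
      x ≠ y → ‖x - y‖ ≤ dGK (x, g) (y, h))
    (hflateq : ∀ (x y : EuclideanSpace ℝ (Fin r)) (g : N),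
      dGK (x, g) (y, g) = ‖x - y‖)
    (C : ℝ) (hC : 0 < C)
    (hsmall : ∀ (a : EuclideanSpace ℝ (Fin r)) (x y : N), dist x y ≤ ε₁ →
      dGK (a, F a x) (a, F a y) ≤ C * dist x y) :
    ∀ p : EuclideanSpace ℝ (Fin r) × N,
      ∃ q ∈ XSet r Δ F, dGK p q ≤ C * ε₁ + 2 * r := by
  rintro ⟨x, g⟩
  set m : Fin r → ℤ := fun i => round (x i) with hm
  set a : EuclideanSpace ℝ (Fin r) := intPt r m with ha
  obtain ⟨h, hhΔ, hh⟩ := hdense (F (-a) g)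
  refine ⟨(a, F a h), ⟨m, h, hhΔ, rfl⟩, ?_⟩
  have hnorm : ‖x - a‖ ≤ 2 * r := by
    have h1 : ‖x - a‖ ≤ Real.sqrt ((2 * r) ^ 2) := by
      rw [EuclideanSpace.norm_eq]
      apply Real.sqrt_le_sqrt
      have hbound : ∀ i : Fin r, ‖(x - a) i‖ ^ 2 ≤ (1 / 2 : ℝ) ^ 2 := by
        intro i
        have : (x - a) i = x i - (m i : ℝ) := by
          rfl
        rw [this, Real.norm_eq_abs]
        have := abs_sub_round (x i)
        have habs : |x i - (m i : ℝ)| ≤ 1 / 2 := by simpa [hm] using this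
        have h0 : (0 : ℝ) ≤ |x i - (m i : ℝ)| := abs_nonneg _
        nlinarith
      calc ∑ i, ‖(x - a) i‖ ^ 2 ≤ ∑ _i : Fin r, (1 / 2 : ℝ) ^ 2 :=
            Finset.sum_le_sum fun i _ => hbound i
        _ = r * (1 / 2 : ℝ) ^ 2 := by simp [mul_comm]
        _ ≤ (2 * r) ^ 2 := by
            have h0 : (0 : ℝ) ≤ r := Nat.cast_nonneg r
            have hr : (r : ℝ) ≤ r * r := by
              rcases Nat.eq_zero_or_pos r with hz | hp
              · simp [hz]
              · exact_mod_cast Nat.le_mul_of_pos_left r hp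
            nlinarith
    have h2 : Real.sqrt ((2 * r) ^ 2) = 2 * r := by
      rw [Real.sqrt_sq (by positivity)]
    linarith [h1, h2.le]
  calc dGK (x, g) (a, F a h)
      ≤ dGK (x, g) (a, g) + dGK (a, g) (a, F a h) := htri _ _ _
    _ ≤ 2 * r + C * ε₁ := by
        have e1 : dGK (x, g) (a, g) = ‖x - a‖ := hflateq x a g
        have e2 : dGK (a, g) (a, F a h) ≤ C * ε₁ := by
          have := hsmall a (F (-a) g) h hh
          rw [hFinv a g] at this
          calc dGK (a, g) (a, F a h) ≤ C * dist (F (-a) g) h := this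
            _ ≤ C * ε₁ := by nlinarith [dist_nonneg (x := F (-a) g) (y := h)]
        linarith
    _ = C * ε₁ + 2 * r := by ring
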